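/- Let α = (α₁,α₂,α₃) ∈ ℂ³ satisfy the triangle inequality and let f : clos(M_α) → ℂ be continuous on clos(M_α) and holomorphic on M_α. Then there exists a point w ∈ clos(M_α) ∩ 𝕋³ such that |f(w)| = max{|f(x)| : x ∈ clos(M_α)}; that is, clos(M_α) ∩ 𝕋³ is a boundary for the algebra of functions continuous on clos(M_α) and holomorphic on M_α. -/

import Mathlib

open Complex Set

/-- The open unit tridisc in `ℂ³`. -/
def triDisc : Set (ℂ × ℂ × ℂ) :=
  {z | ‖z.1‖ < 1 ∧ ‖z.2.1‖ < 1 ∧ ‖z.2.2‖ < 1}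

/-- The variety `M_α ⊆ 𝔻³`. -/
def Mvar (a : ℂ × ℂ × ℂ) : Set (ℂ × ℂ × ℂ) :=
  {z | z ∈ triDisc ∧
    a.1 * z.1 + a.2.1 * z.2.1 + a.2.2 * z.2.2 =
      (starRingEnd ℂ) a.1 * z.2.1 * z.2.2 + (starRingEnd ℂ) a.2.1 * z.1 * z.2.2 +
        (starRingEnd ℂ) a.2.2 * z.1 * z.2.1}

/-- A triple `α ∈ ℂ³` satisfies the triangle inequality. -/
def TriangleIneq (a : ℂ × ℂ × ℂ) : Prop :=
  ‖a.2.2‖ < ‖a.1‖ + ‖a.2.1‖ ∧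
  ‖a.1‖ < ‖a.2.1‖ + ‖a.2.2‖ ∧
  ‖a.2.1‖ < ‖a.1‖ + ‖a.2.2‖

/-- The three-torus `𝕋³ ⊆ ℂ³`. -/
def triTorus : Set (ℂ × ℂ × ℂ) :=
  {z | ‖z.1‖ = 1 ∧ ‖z.2.1‖ = 1 ∧ ‖z.2.2‖ = 1}

/-- `f` is holomorphic on the subset `S` of `ℂ³`: near each point of `S` it extends to a
holomorphic function on an open neighbourhood. -/
def HolomorphicOnSubset (f : ℂ × ℂ × ℂ → ℂ) (S : Set (ℂ × ℂ × ℂ)) : Prop :=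
  ∀ p ∈ S, ∃ U : Set (ℂ × ℂ × ℂ), IsOpen U ∧ p ∈ U ∧
    ∃ F : ℂ × ℂ × ℂ → ℂ, DifferentiableOn ℂ F U ∧ ∀ x ∈ U ∩ S, F x = f x

open Metric Bornology Filter

noncomputable section

private lemma normSq_key (a b l : ℂ) :
    normSq (b*l - a) - normSq ((starRingEnd ℂ) a * l - (starRingEnd ℂ) b)
      = (normSq a - normSq b) * (1 - normSq l) := by
  simp only [normSq_apply, mul_re, mul_im, sub_re, sub_im, conj_re, conj_im]
  ring

/-- A Möbius-type map. -/
def mob (a b μ : ℂ) (l : ℂ) : ℂ :=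
  μ * ((starRingEnd ℂ) a * l - (starRingEnd ℂ) b) / (b * l - a)

lemma mob_den_ne {a b : ℂ} (hab : normSq b < normSq a) {l : ℂ}
    (hl : ‖l‖ ≤ 1) : b * l - a ≠ 0 := by
  intro h
  have ha : a = b * l := by linear_combination -h
  have h1 : normSq a = normSq b * normSq l := by rw [ha, normSq_mul]
  have h2 : normSq l ≤ 1 := by
    have := Complex.sq_norm l
    nlinarith [norm_nonneg l]
  nlinarith [normSq_nonneg b, normSq_nonneg l]

lemma mob_abs_lt {a b μ : ℂ} (hab : normSq b < normSq a) (hμ : ‖μ‖ = 1)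
    {l : ℂ} (hl : ‖l‖ < 1) : ‖(mob a b μ l)‖ < 1 := by
  have hden := mob_den_ne hab hl.le
  have hdenpos : 0 < ‖(b * l - a)‖ := by
    simpa [norm_pos_iff] using hden
  have hnum : normSq ((starRingEnd ℂ) a * l - (starRingEnd ℂ) b) < normSq (b * l - a) := by
    have hk := normSq_key a b l
    have h2 : normSq l < 1 := by
      have := Complex.sq_norm l
      nlinarith [norm_nonneg l]
    nlinarith
  have habslt : ‖((starRingEnd ℂ) a * l - (starRingEnd ℂ) b)‖ < ‖(b * l - a)‖ := by
    have h1 := Complex.sq_norm ((starRingEnd ℂ) a * l - (starRingEnd ℂ) b)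
    have h2 := Complex.sq_norm (b * l - a)
    nlinarith [norm_nonneg ((starRingEnd ℂ) a * l - (starRingEnd ℂ) b),
      norm_nonneg (b * l - a)]
  rw [mob, norm_div, norm_mul, hμ, one_mul, div_lt_one hdenpos]
  exact habslt

lemma mob_abs_eq {a b μ : ℂ} (hab : normSq b < normSq a) (hμ : ‖μ‖ = 1)
    {l : ℂ} (hl : ‖l‖ = 1) : ‖(mob a b μ l)‖ = 1 := by
  have hden := mob_den_ne hab hl.le
  have hdenpos : 0 < ‖(b * l - a)‖ := by
    simpa [norm_pos_iff] using hden
  have hnum : normSq ((starRingEnd ℂ) a * l - (starRingEnd ℂ) b) = normSq (b * l - a) := by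
    have hk := normSq_key a b l
    have h2 : normSq l = 1 := by
      have := Complex.sq_norm l
      nlinarith
    nlinarith
  have habs : ‖((starRingEnd ℂ) a * l - (starRingEnd ℂ) b)‖ = ‖(b * l - a)‖ := by
    rw [Complex.norm_def, Complex.norm_def, hnum]
  rw [mob, norm_div, norm_mul, hμ, one_mul, habs, div_self hdenpos.ne']

lemma mob_diffOn {a b : ℂ} (μ : ℂ) (hab : normSq b < normSq a) :
    DifferentiableOn ℂ (mob a b μ) (closedBall 0 1) := by
  have h1 : Differentiable ℂ (fun l : ℂ => μ * ((starRingEnd ℂ) a * l - (starRingEnd ℂ) b)) := by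
    fun_prop
  have h2 : Differentiable ℂ (fun l : ℂ => b * l - a) := by fun_prop
  apply DifferentiableOn.div h1.differentiableOn h2.differentiableOn
  intro l hl
  exact mob_den_ne hab (by simpa using mem_closedBall_zero_iff.1 hl)

lemma mob_zero (a b μ : ℂ) : mob a b μ 0 = μ * (starRingEnd ℂ) b / a := by
  simp [mob, neg_div_neg_eq]


lemma tri_pos (α : ℂ × ℂ × ℂ) (hα : TriangleIneq α) :
    0 < ‖α.1‖ ∧ 0 < ‖α.2.1‖ ∧ 0 < ‖α.2.2‖ := by
  obtain ⟨h1, h2, h3⟩ := hα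
  have n1 := norm_nonneg α.1
  have n2 := norm_nonneg α.2.1
  have n3 := norm_nonneg α.2.2
  refine ⟨?_, ?_, ?_⟩ <;> linarith

lemma den_ne (α : ℂ × ℂ × ℂ) (hα : TriangleIneq α) (p : ℂ × ℂ × ℂ) (hp : p ∈ Mvar α) :
    α.1 - (starRingEnd ℂ) α.2.1 * p.2.2 - (starRingEnd ℂ) α.2.2 * p.2.1 ≠ 0 := by
  obtain ⟨hx, hy, hz⟩ := tri_pos α hα
  obtain ⟨⟨hp1, hp2, hp3⟩, heq⟩ := hp
  intro hd0
  have hα1ne : α.1 ≠ 0 := fun h => by simp [h] at hx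
  have hα3ne : α.2.2 ≠ 0 := fun h => by simp [h] at hz
  have hnum : (starRingEnd ℂ) α.1 * (p.2.1 * p.2.2) - α.2.1 * p.2.1 - α.2.2 * p.2.2 = 0 := by
    linear_combination p.1 * hd0 - heq
  have hp2ne : p.2.1 ≠ 0 := by
    intro h0
    rw [h0] at hnum hd0
    have hp3z : p.2.2 = 0 := by
      have : α.2.2 * p.2.2 = 0 := by linear_combination -hnum
      rcases mul_eq_zero.1 this with h | h
      · exact absurd h hα3ne
      · exact h
    rw [hp3z] at hd0
    simp at hd0
    exact hα1ne hd0
  have hquad : (starRingEnd ℂ) α.1 * (starRingEnd ℂ) α.2.2 * p.2.1 ^ 2 + α.1 * α.2.2 =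
      (α.1 * (starRingEnd ℂ) α.1 + α.2.2 * (starRingEnd ℂ) α.2.2
        - α.2.1 * (starRingEnd ℂ) α.2.1) * p.2.1 := by
    linear_combination (-((starRingEnd ℂ) α.1 * p.2.1 - α.2.2)) * hd0
      - (starRingEnd ℂ) α.2.1 * hnum
  set u : ℂ := (starRingEnd ℂ) α.1 * (starRingEnd ℂ) α.2.2 * p.2.1 with hu
  have hKc : α.1 * (starRingEnd ℂ) α.1 + α.2.2 * (starRingEnd ℂ) α.2.2
      - α.2.1 * (starRingEnd ℂ) α.2.1
      = ((‖α.1‖ ^ 2 + ‖α.2.2‖ ^ 2 - ‖α.2.1‖ ^ 2 : ℝ) : ℂ) := by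
    rw [Complex.mul_conj, Complex.mul_conj, Complex.mul_conj]
    simp only [Complex.normSq_eq_norm_sq]
    norm_cast
  have hT : p.2.1 * (starRingEnd ℂ) p.2.1 = ((normSq p.2.1 : ℝ) : ℂ) := Complex.mul_conj p.2.1
  set Kr : ℝ := ‖α.1‖ ^ 2 + ‖α.2.2‖ ^ 2 - ‖α.2.1‖ ^ 2 with hKr
  set T : ℝ := normSq p.2.1 with hTdef
  have hE : u * (T : ℂ) + (starRingEnd ℂ) u = (Kr : ℂ) * (T : ℂ) := by
    have h := hquad
    rw [hKc] at h
    have hconj : (starRingEnd ℂ) u = α.1 * α.2.2 * (starRingEnd ℂ) p.2.1 := by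
      simp [hu, map_mul]
    rw [hconj]
    linear_combination (starRingEnd ℂ) p.2.1 * h
      - ((starRingEnd ℂ) α.1 * (starRingEnd ℂ) α.2.2 * p.2.1 - (Kr : ℂ)) * hT
  have him0 := congrArg Complex.im hE
  simp only [Complex.add_im, Complex.mul_im, Complex.ofReal_re, Complex.ofReal_im,
    Complex.conj_im, mul_zero, zero_mul, add_zero, zero_add] at him0
  have hT1 : T < 1 := by
    have := Complex.sq_norm p.2.1
    nlinarith [norm_nonneg p.2.1]
  have huim : u.im = 0 := by
    rcases mul_eq_zero.1 (show u.im * (T - 1) = 0 by linarith [him0]) with h | h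
    · exact h
    · exfalso; nlinarith
  have hre0 := congrArg Complex.re hE
  simp only [Complex.add_re, Complex.mul_re, Complex.ofReal_re, Complex.ofReal_im,
    Complex.conj_re, mul_zero, zero_mul, add_zero, zero_add, sub_zero] at hre0
  have hre : u.re * T + u.re = Kr * T := by linarith [hre0]
  set t : ℝ := ‖p.2.1‖ with ht
  have htpos : 0 < t := by
    rw [ht]
    exact norm_pos_iff.mpr hp2ne
  have hT2 : T = t ^ 2 := by rw [hTdef, ht, ← Complex.sq_norm]
  have hureal : u = (u.re : ℂ) := Complex.ext rfl (by simp [huim])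
  have habsu : |u.re| = ‖α.1‖ * ‖α.2.2‖ * t := by
    have h1 : ‖u‖ = ‖α.1‖ * ‖α.2.2‖ * t := by
      simp [hu, map_mul, Complex.norm_conj, ht]
    rw [hureal] at h1
    simpa [Complex.norm_real, Real.norm_eq_abs] using h1
  have hKrabs : |Kr| < 2 * ‖α.1‖ * ‖α.2.2‖ := by
    obtain ⟨h1, h2, h3⟩ := hα
    rw [hKr, abs_lt]
    constructor <;> nlinarith
  have h5 : |u.re| * (T + 1) = |Kr| * T := by
    have h6 : |u.re * (T + 1)| = |Kr * T| := by rw [show u.re * (T+1) = Kr * T by linarith]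
    have hTnn : (0:ℝ) ≤ T := normSq_nonneg _
    rw [abs_mul, abs_mul, _root_.abs_of_pos (by linarith : (0:ℝ) < T + 1),
      _root_.abs_of_nonneg hTnn] at h6
    exact h6
  have h7 : 0 < ‖α.1‖ * ‖α.2.2‖ * t * ((t-1)^2) := by
    apply mul_pos (mul_pos (mul_pos hx hz) htpos)
    have ht1 : t - 1 < 0 := by linarith
    nlinarith
  have h8 : |Kr| * t^2 < 2 * ‖α.1‖ * ‖α.2.2‖ * t^2 := by
    apply mul_lt_mul_of_pos_right hKrabs (by positivity)
  have h9 : ‖α.1‖ * ‖α.2.2‖ * t * (t ^ 2 + 1) = |Kr| * t ^ 2 := by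
    rw [← habsu, ← hT2]; linarith [h5]
  nlinarith [h7, h8, h9]

lemma abs_one_of_unit {ω : ℂ} (hω : ω * (starRingEnd ℂ) ω = 1) : ‖ω‖ = 1 := by
  have hn : Complex.normSq ω = 1 := by
    have := hω; rw [Complex.mul_conj] at this; exact_mod_cast this
  rw [Complex.norm_def, hn, Real.sqrt_one]

lemma blaschke_data (ω p₀ : ℂ) (hω : ω * (starRingEnd ℂ) ω = 1) (hp₀ : ‖p₀‖ < 1) :
    ∃ μ c : ℂ, μ * (starRingEnd ℂ) μ = 1 ∧ ‖c‖ < 1 ∧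
      μ * (starRingEnd ℂ) c = p₀ ∧ μ * (1 + (starRingEnd ℂ) c) = ω * (1 + c) := by
  have habsω : ‖ω‖ = 1 := abs_one_of_unit hω
  set q : ℂ := (starRingEnd ℂ) ω * p₀ with hq
  have habsq : ‖q‖ < 1 := by
    rw [hq, norm_mul, Complex.norm_conj, habsω, one_mul]; exact hp₀
  have h1 : (1:ℂ) - (starRingEnd ℂ) q ≠ 0 := by
    intro h0
    have h2 : (starRingEnd ℂ) q = 1 := by linear_combination -h0
    have h3 : ‖q‖ = 1 := by rw [← Complex.norm_conj, h2, norm_one]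
    linarith
  have h2 : (1:ℂ) - q ≠ 0 := by
    intro h0
    have h3 : q = 1 := by linear_combination -h0
    rw [h3] at habsq; simp at habsq
  set u : ℂ := (1 - q)/(1 - (starRingEnd ℂ) q) with hudef
  have hcu : (starRingEnd ℂ) u = (1 - (starRingEnd ℂ) q)/(1 - q) := by
    rw [hudef]; simp [map_div₀, map_sub, map_one]
  have hu : u * (starRingEnd ℂ) u = 1 := by
    rw [hcu, hudef, div_mul_div_comm]
    rw [div_eq_one_iff_eq (by exact mul_ne_zero h1 h2)]
    ring
  have hu3 : u * (1 - (starRingEnd ℂ) q) = 1 - q := by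
    rw [hudef]; field_simp
  have habsu : ‖u‖ = 1 := abs_one_of_unit hu
  refine ⟨ω * u, (starRingEnd ℂ) q * u, ?_, ?_, ?_, ?_⟩
  · have : ω * u * (starRingEnd ℂ) (ω * u) = (ω * (starRingEnd ℂ) ω) * (u * (starRingEnd ℂ) u) := by
      rw [map_mul]; ring
    rw [this, hω, hu, one_mul]
  · rw [norm_mul, Complex.norm_conj, habsu, mul_one]; exact habsq
  · have hcc : (starRingEnd ℂ) ((starRingEnd ℂ) q * u) = q * (starRingEnd ℂ) u := by
      rw [map_mul, Complex.conj_conj]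
    rw [hcc]
    linear_combination (ω * q) * hu + p₀ * hω + ω * hq
  · have hcc : (starRingEnd ℂ) ((starRingEnd ℂ) q * u) = q * (starRingEnd ℂ) u := by
      rw [map_mul, Complex.conj_conj]
    rw [hcc]
    linear_combination (ω * q) * hu + ω * hu3

lemma node_data (α : ℂ × ℂ × ℂ) (hα : TriangleIneq α) :
    ∃ ω₂ ω₃ : ℂ, ω₂ * (starRingEnd ℂ) ω₂ = 1 ∧ ω₃ * (starRingEnd ℂ) ω₃ = 1 ∧
      (starRingEnd ℂ) α.2.1 * ω₃ + (starRingEnd ℂ) α.2.2 * ω₂ = α.1 := by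
  obtain ⟨hx, hy, hz⟩ := tri_pos α hα
  obtain ⟨ht1, ht2, ht3⟩ := hα
  have hα1ne : α.1 ≠ 0 := fun h => by simp [h] at hx
  have hα2ne : α.2.1 ≠ 0 := fun h => by simp [h] at hy
  have hα3ne : α.2.2 ≠ 0 := fun h => by simp [h] at hz
  have hxne : ‖α.1‖ ≠ 0 := ne_of_gt hx
  set X : ℝ := ‖α.1‖
  set Y : ℝ := ‖α.2.1‖
  set Z : ℝ := ‖α.2.2‖
  set K : ℝ := X^2 + Y^2 - Z^2 with hK
  have hd : 0 ≤ 4*X^2*Y^2 - K^2 := by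
    rw [hK]
    have f1 : 0 < Z - X + Y := by linarith
    have f2 : 0 < Z + X - Y := by linarith
    have f3 : 0 < X + Y - Z := by linarith
    have f4 : 0 < X + Y + Z := by linarith
    have hfac : 4*X^2*Y^2 - (X^2 + Y^2 - Z^2)^2
        = ((Z - X + Y)*(Z + X - Y))*((X + Y - Z)*(X + Y + Z)) := by ring
    rw [hfac]
    exact le_of_lt (mul_pos (mul_pos f1 f2) (mul_pos f3 f4))
  set h : ℝ := Real.sqrt (4*X^2*Y^2 - K^2) with hhdef
  have hh : h^2 = 4*X^2*Y^2 - K^2 := Real.sq_sqrt hd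
  set w : ℂ := (K:ℂ) + (h:ℂ)*Complex.I with hwdef
  have hw : Complex.normSq w = 4*X^2*Y^2 := by
    rw [hwdef, Complex.normSq_add_mul_I]
    linarith
  set s : ℂ := α.1 * w / ((2*X^2 : ℝ):ℂ) with hsdef
  have hX2ne : ((2*X^2 : ℝ):ℂ) ≠ 0 := by
    simp only [ne_eq, Complex.ofReal_eq_zero]
    positivity
  have hnX : Complex.normSq α.1 = X^2 := Complex.normSq_eq_norm_sq α.1
  have hs : Complex.normSq s = Y^2 := by
    rw [hsdef, Complex.normSq_div, Complex.normSq_mul, hnX, hw, Complex.normSq_ofReal]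
    field_simp
    ring
  have hrepr : α.1 - s = α.1 * (((2*X^2 - K : ℝ):ℂ) - (h:ℂ)*Complex.I) / ((2*X^2 : ℝ):ℂ) := by
    rw [eq_div_iff hX2ne, sub_mul, hsdef, div_mul_cancel₀ _ hX2ne]
    push_cast
    ring
  have has : Complex.normSq (α.1 - s) = Z^2 := by
    rw [hrepr, Complex.normSq_div, Complex.normSq_mul, hnX, Complex.normSq_ofReal]
    have hw2 : Complex.normSq (((2*X^2 - K : ℝ):ℂ) - (h:ℂ)*Complex.I) = (2*X^2-K)^2 + h^2 := by
      have : (((2*X^2 - K : ℝ):ℂ) - (h:ℂ)*Complex.I) = ((2*X^2 - K : ℝ):ℂ) + ((-h : ℝ):ℂ)*Complex.I := by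
        push_cast; ring
      rw [this, Complex.normSq_add_mul_I]
      ring
    rw [hw2]
    have hKz : (2*X^2-K)^2 + h^2 = 4*X^2*Z^2 := by rw [hh, hK]; ring
    rw [hKz]
    field_simp
    ring
  refine ⟨(α.1 - s) / (starRingEnd ℂ) α.2.2, s / (starRingEnd ℂ) α.2.1, ?_, ?_, ?_⟩
  · have hn : Complex.normSq ((α.1 - s) / (starRingEnd ℂ) α.2.2) = 1 := by
      rw [Complex.normSq_div, has, Complex.normSq_conj, Complex.normSq_eq_norm_sq]
      field_simp
      rfl
    rw [Complex.mul_conj, hn, Complex.ofReal_one]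
  · have hn : Complex.normSq (s / (starRingEnd ℂ) α.2.1) = 1 := by
      rw [Complex.normSq_div, hs, Complex.normSq_conj, Complex.normSq_eq_norm_sq]
      field_simp
      rfl
    rw [Complex.mul_conj, hn, Complex.ofReal_one]
  · have hc2 : (starRingEnd ℂ) α.2.1 ≠ 0 := fun h0 => hα2ne (by simpa using congrArg (starRingEnd ℂ) h0)
    have hc3 : (starRingEnd ℂ) α.2.2 ≠ 0 := fun h0 => hα3ne (by simpa using congrArg (starRingEnd ℂ) h0)
    field_simp
    ring

lemma eq_of_cleared {n1 d1 n2 d2 n3 d3 a1 a2 a3 b1 b2 b3 : ℂ}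
    (h1 : d1 ≠ 0) (h2 : d2 ≠ 0) (h3 : d3 ≠ 0)
    (h : a1*n1*(d2*d3) + a2*n2*(d1*d3) + a3*n3*(d1*d2)
      = b1*(n2*n3)*d1 + b2*(n1*n3)*d2 + b3*(n1*n2)*d3) :
    a1*(n1/d1) + a2*(n2/d2) + a3*(n3/d3)
      = b1*(n2/d2)*(n3/d3) + b2*(n1/d1)*(n3/d3) + b3*(n1/d1)*(n2/d2) := by
  have hd : d1*(d2*d3) ≠ 0 := mul_ne_zero h1 (mul_ne_zero h2 h3)
  have e1 : a1*(n1/d1) + a2*(n2/d2) + a3*(n3/d3)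
      = (a1*n1*(d2*d3) + a2*n2*(d1*d3) + a3*n3*(d1*d2))/(d1*(d2*d3)) := by
    rw [eq_div_iff hd]
    field_simp
  have e2 : b1*(n2/d2)*(n3/d3) + b2*(n1/d1)*(n3/d3) + b3*(n1/d1)*(n2/d2)
      = (b1*(n2*n3)*d1 + b2*(n1*n3)*d2 + b3*(n1*n2)*d3)/(d1*(d2*d3)) := by
    rw [eq_div_iff hd]
    field_simp
  rw [e1, e2, h]

lemma normSq_lt_neg_one {c : ℂ} (h : ‖c‖ < 1) :
    Complex.normSq c < Complex.normSq (-1 : ℂ) := by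
  have h1 : Complex.normSq c = ‖c‖ ^ 2 := Complex.normSq_eq_norm_sq c
  have h2 : Complex.normSq (-1:ℂ) = 1 := by simp
  rw [h1, h2]
  nlinarith [norm_nonneg c]

lemma exists_disc (α : ℂ × ℂ × ℂ) (hα : TriangleIneq α) (p : ℂ × ℂ × ℂ) (hp : p ∈ Mvar α) :
    ∃ φ : ℂ → ℂ × ℂ × ℂ, DifferentiableOn ℂ φ (closedBall 0 1) ∧ φ 0 = p ∧
      (∀ l ∈ ball (0:ℂ) 1, φ l ∈ Mvar α) ∧ (∀ l ∈ sphere (0:ℂ) 1, φ l ∈ triTorus) := by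
  obtain ⟨ω₂, ω₃, hω₂u, hω₃u, hnode⟩ := node_data α hα
  have hd₀ne := den_ne α hα p hp
  obtain ⟨⟨hp1, hp2, hp3⟩, heq⟩ := hp
  obtain ⟨μ₂, c₂, hμ₂u, hc₂a, hp₂', hB₂1⟩ := blaschke_data ω₂ p.2.1 hω₂u hp2
  obtain ⟨μ₃, c₃, hμ₃u, hc₃a, hp₃', hB₃1⟩ := blaschke_data ω₃ p.2.2 hω₃u hp3
  set d₀ : ℂ := α.1 - (starRingEnd ℂ) α.2.1 * p.2.2 - (starRingEnd ℂ) α.2.2 * p.2.1 with hd₀def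
  set d₂ : ℂ := α.1*c₂*c₃ - (starRingEnd ℂ) α.2.1*μ₃*c₂ - (starRingEnd ℂ) α.2.2*μ₂*c₃ with hd₂def
  set d₁ : ℂ := α.1*(c₂+c₃) - (starRingEnd ℂ) α.2.1*μ₃*(1+(starRingEnd ℂ) c₃*c₂)
      - (starRingEnd ℂ) α.2.2*μ₂*(1+(starRingEnd ℂ) c₂*c₃) with hd₁def
  have hcd₀ : (starRingEnd ℂ) d₀ = (starRingEnd ℂ) α.1 - α.2.1 * (starRingEnd ℂ) p.2.2
      - α.2.2 * (starRingEnd ℂ) p.2.1 := by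
    rw [hd₀def]; simp [map_sub, map_mul]
  have hcd₂ : (starRingEnd ℂ) d₂ = (starRingEnd ℂ) α.1 * (starRingEnd ℂ) c₂ * (starRingEnd ℂ) c₃
      - α.2.1 * (starRingEnd ℂ) μ₃ * (starRingEnd ℂ) c₂
      - α.2.2 * (starRingEnd ℂ) μ₂ * (starRingEnd ℂ) c₃ := by
    rw [hd₂def]; simp [map_sub, map_mul]
  have hcd₁ : (starRingEnd ℂ) d₁ = (starRingEnd ℂ) α.1 * ((starRingEnd ℂ) c₂ + (starRingEnd ℂ) c₃)
      - α.2.1 * (starRingEnd ℂ) μ₃ * (1 + c₃ * (starRingEnd ℂ) c₂)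
      - α.2.2 * (starRingEnd ℂ) μ₂ * (1 + c₂ * (starRingEnd ℂ) c₃) := by
    rw [hd₁def]; simp [map_sub, map_mul, map_add, map_one]
  have hcp₂ : (starRingEnd ℂ) p.2.1 = (starRingEnd ℂ) μ₂ * c₂ := by
    rw [← hp₂']; simp [map_mul]
  have hcp₃ : (starRingEnd ℂ) p.2.2 = (starRingEnd ℂ) μ₃ * c₃ := by
    rw [← hp₃']; simp [map_mul]
  have hkey0 : μ₂ * μ₃ * (starRingEnd ℂ) d₂ = p.1 * d₀ := by
    rw [hcd₂, hd₀def]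
    linear_combination ((starRingEnd ℂ) α.1 * (μ₃ * (starRingEnd ℂ) c₃)
        - α.2.1 * (μ₃ * (starRingEnd ℂ) μ₃)) * hp₂'
      + ((starRingEnd ℂ) α.1 * p.2.1 - α.2.2 * (μ₂ * (starRingEnd ℂ) μ₂)) * hp₃'
      - α.2.1 * p.2.1 * hμ₃u - α.2.2 * p.2.2 * hμ₂u - heq
  have hnμ₂ : Complex.normSq μ₂ = 1 := by
    have := hμ₂u; rw [Complex.mul_conj] at this; exact_mod_cast this
  have hnμ₃ : Complex.normSq μ₃ = 1 := by
    have := hμ₃u; rw [Complex.mul_conj] at this; exact_mod_cast this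
  have hnormlt : Complex.normSq d₂ < Complex.normSq d₀ := by
    have h1 := congrArg Complex.normSq hkey0
    rw [Complex.normSq_mul, Complex.normSq_mul, Complex.normSq_conj, Complex.normSq_mul,
      hnμ₂, hnμ₃] at h1
    have hd₀pos : 0 < Complex.normSq d₀ := Complex.normSq_pos.2 hd₀ne
    have hp1n : Complex.normSq p.1 < 1 := by
      rw [Complex.normSq_eq_norm_sq]
      nlinarith [norm_nonneg p.1]
    nlinarith [Complex.normSq_nonneg p.1]
  have hsum : d₀ + d₁ + d₂ = 0 := by
    rw [hd₀def, hd₁def, hd₂def, ← hp₂', ← hp₃']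
    linear_combination (-(starRingEnd ℂ) α.2.1*(1+c₂))*hB₃1
      + (-(starRingEnd ℂ) α.2.2*(1+c₃))*hB₂1 - ((1+c₂)*(1+c₃))*hnode
  have hsumc : (starRingEnd ℂ) d₀ + (starRingEnd ℂ) d₁ + (starRingEnd ℂ) d₂ = 0 := by
    have h0 := congrArg (starRingEnd ℂ) hsum
    simpa [map_add] using h0
  have hA : ∀ l : ℂ, (μ₂*μ₃*((starRingEnd ℂ) d₀*l - (starRingEnd ℂ) d₂))*(d₀ + d₁*l + d₂*l^2)
      = (d₂*l - d₀)*(μ₂*μ₃*(starRingEnd ℂ) d₂ + μ₂*μ₃*(starRingEnd ℂ) d₁*l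
        + μ₂*μ₃*(starRingEnd ℂ) d₀*l^2) := by
    intro l
    linear_combination (μ₂*μ₃*l*((starRingEnd ℂ) d₀*l - (starRingEnd ℂ) d₂))*hsum
      - (μ₂*μ₃*l*(d₂*l - d₀))*hsumc
  have hDpoly : ∀ l : ℂ, α.1*(1+c₂*l)*(1+c₃*l)
      - (starRingEnd ℂ) α.2.1*(μ₃*(l+(starRingEnd ℂ) c₃))*(1+c₂*l)
      - (starRingEnd ℂ) α.2.2*(μ₂*(l+(starRingEnd ℂ) c₂))*(1+c₃*l)
      = d₀ + d₁*l + d₂*l^2 := by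
    intro l
    rw [hd₀def, hd₁def, hd₂def, ← hp₂', ← hp₃']
    ring
  have hNpoly : ∀ l : ℂ, (starRingEnd ℂ) α.1*(μ₂*(l+(starRingEnd ℂ) c₂))*(μ₃*(l+(starRingEnd ℂ) c₃))
      - α.2.1*(μ₂*(l+(starRingEnd ℂ) c₂))*(1+c₃*l)
      - α.2.2*(μ₃*(l+(starRingEnd ℂ) c₃))*(1+c₂*l)
      = μ₂*μ₃*(starRingEnd ℂ) d₂ + μ₂*μ₃*(starRingEnd ℂ) d₁*l + μ₂*μ₃*(starRingEnd ℂ) d₀*l^2 := by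
    intro l
    rw [hcd₀, hcd₁, hcd₂, hcp₂, hcp₃]
    linear_combination (α.2.1*μ₂*((starRingEnd ℂ) c₂ + (1+(starRingEnd ℂ) c₂*c₃)*l + c₃*l^2))*hμ₃u
      + (α.2.2*μ₃*((starRingEnd ℂ) c₃ + (1+(starRingEnd ℂ) c₃*c₂)*l + c₂*l^2))*hμ₂u
  -- absolute values
  have habsμ₂ := abs_one_of_unit hμ₂u
  have habsμ₃ := abs_one_of_unit hμ₃u
  have habsμ₂₃ : ‖(μ₂*μ₃)‖ = 1 := by rw [norm_mul, habsμ₂, habsμ₃, one_mul]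
  have habsn₂ : ‖(-μ₂)‖ = 1 := by simp [habsμ₂]
  have habsn₃ : ‖(-μ₃)‖ = 1 := by simp [habsμ₃]
  have hn₂ := normSq_lt_neg_one hc₂a
  have hn₃ := normSq_lt_neg_one hc₃a
  refine ⟨fun l => (mob d₀ d₂ (μ₂*μ₃) l, mob (-1) c₂ (-μ₂) l, mob (-1) c₃ (-μ₃) l), ?_, ?_, ?_, ?_⟩
  · exact DifferentiableOn.prodMk (mob_diffOn _ hnormlt)
      (DifferentiableOn.prodMk (mob_diffOn _ hn₂) (mob_diffOn _ hn₃))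
  · have e1 : mob d₀ d₂ (μ₂*μ₃) 0 = p.1 := by
      rw [mob_zero, div_eq_iff hd₀ne]; linear_combination hkey0
    have e2 : mob (-1) c₂ (-μ₂) 0 = p.2.1 := by
      rw [mob_zero]
      rw [div_eq_iff (by norm_num : (-1:ℂ) ≠ 0)]
      linear_combination -hp₂'
    have e3 : mob (-1) c₃ (-μ₃) 0 = p.2.2 := by
      rw [mob_zero]
      rw [div_eq_iff (by norm_num : (-1:ℂ) ≠ 0)]
      linear_combination -hp₃'
    exact Prod.ext_iff.2 ⟨e1, Prod.ext_iff.2 ⟨e2, e3⟩⟩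
  · intro l hl
    have hla : ‖l‖ < 1 := by
      simpa using mem_ball_zero_iff.1 hl
    refine ⟨⟨mob_abs_lt hnormlt habsμ₂₃ hla, mob_abs_lt hn₂ habsn₂ hla,
      mob_abs_lt hn₃ habsn₃ hla⟩, ?_⟩
    have hz1 : d₂*l - d₀ ≠ 0 := mob_den_ne hnormlt hla.le
    have hz2 : c₂*l - (-1) ≠ 0 := mob_den_ne hn₂ hla.le
    have hz3 : c₃*l - (-1) ≠ 0 := mob_den_ne hn₃ hla.le
    show α.1 * mob d₀ d₂ (μ₂*μ₃) l + α.2.1 * mob (-1) c₂ (-μ₂) l + α.2.2 * mob (-1) c₃ (-μ₃) l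
      = (starRingEnd ℂ) α.1 * mob (-1) c₂ (-μ₂) l * mob (-1) c₃ (-μ₃) l
        + (starRingEnd ℂ) α.2.1 * mob d₀ d₂ (μ₂*μ₃) l * mob (-1) c₃ (-μ₃) l
        + (starRingEnd ℂ) α.2.2 * mob d₀ d₂ (μ₂*μ₃) l * mob (-1) c₂ (-μ₂) l
    have hm : (starRingEnd ℂ) (-1:ℂ) = -1 := by simp
    have m1 : mob d₀ d₂ (μ₂*μ₃) l
        = (μ₂*μ₃*((starRingEnd ℂ) d₀*l - (starRingEnd ℂ) d₂))/(d₂*l - d₀) := by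
      simp only [mob]
    have m2 : mob (-1) c₂ (-μ₂) l = (μ₂*(l + (starRingEnd ℂ) c₂))/(c₂*l - (-1)) := by
      simp only [mob, hm]
      congr 1
      ring
    have m3 : mob (-1) c₃ (-μ₃) l = (μ₃*(l + (starRingEnd ℂ) c₃))/(c₃*l - (-1)) := by
      simp only [mob, hm]
      congr 1
      ring
    rw [m1, m2, m3]
    apply eq_of_cleared hz1 hz2 hz3
    linear_combination (μ₂*μ₃*((starRingEnd ℂ) d₀*l - (starRingEnd ℂ) d₂))*(hDpoly l)
      - (d₂*l - d₀)*(hNpoly l) + hA l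
  · intro l hl
    have hla : ‖l‖ = 1 := by
      simpa using mem_sphere_zero_iff_norm.1 hl
    exact ⟨mob_abs_eq hnormlt habsμ₂₃ hla, mob_abs_eq hn₂ habsn₂ hla, mob_abs_eq hn₃ habsn₃ hla⟩


theorem torus_points_form_boundary_for_M_alpha
    (α : ℂ × ℂ × ℂ) (hα : TriangleIneq α)
    (f : ℂ × ℂ × ℂ → ℂ)
    (hfc : ContinuousOn f (closure (Mvar α)))
    (hfh : HolomorphicOnSubset f (Mvar α)) :
    ∃ w ∈ closure (Mvar α) ∩ triTorus,
      ∀ x ∈ closure (Mvar α), ‖(f x)‖ ≤ ‖(f w)‖ := by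
  -- 0 ∈ Mvar α
  have h0M : (0 : ℂ × ℂ × ℂ) ∈ Mvar α := by
    refine ⟨⟨?_, ?_, ?_⟩, ?_⟩ <;> simp
  -- boundedness
  have hb : Bornology.IsBounded (Mvar α) := by
    apply (isBounded_closedBall (x := (0:ℂ × ℂ × ℂ)) (r := 1)).subset
    intro z hz
    obtain ⟨⟨h1, h2, h3⟩, -⟩ := hz
    rw [mem_closedBall_zero_iff]
    have hn : ‖z‖ = max ‖z.1‖ (max ‖z.2.1‖ ‖z.2.2‖) := by
      rw [Prod.norm_def, Prod.norm_def]
    rw [hn]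
    exact max_le h1.le (max_le h2.le h3.le)
  have hcc : IsCompact (closure (Mvar α)) :=
    Metric.isCompact_of_isClosed_isBounded isClosed_closure hb.closure
  -- triTorus is closed
  have hTclosed : IsClosed triTorus := by
    have hrep : triTorus = (fun z : ℂ × ℂ × ℂ => ‖z.1‖) ⁻¹' {1} ∩
        ((fun z : ℂ × ℂ × ℂ => ‖z.2.1‖) ⁻¹' {1} ∩
          (fun z : ℂ × ℂ × ℂ => ‖z.2.2‖) ⁻¹' {1}) := by
      ext z; simp [triTorus]
    rw [hrep]
    refine IsClosed.inter ?_ (IsClosed.inter ?_ ?_)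
    · exact IsClosed.preimage (continuous_norm.comp continuous_fst) isClosed_singleton
    · exact IsClosed.preimage
        (continuous_norm.comp (continuous_fst.comp continuous_snd)) isClosed_singleton
    · exact IsClosed.preimage
        (continuous_norm.comp (continuous_snd.comp continuous_snd)) isClosed_singleton
  -- discs map the closed ball into the closure
  have hmapscl : ∀ (φ : ℂ → ℂ × ℂ × ℂ), DifferentiableOn ℂ φ (closedBall 0 1) →
      (∀ l ∈ ball (0:ℂ) 1, φ l ∈ Mvar α) →
      ∀ l ∈ closedBall (0:ℂ) 1, φ l ∈ closure (Mvar α) := by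
    intro φ hd hb' l hl
    have hcb : closedBall (0:ℂ) 1 = closure (ball 0 1) := (closure_ball 0 one_ne_zero).symm
    have hcont : ContinuousOn φ (closure (ball (0:ℂ) 1)) := by
      rw [← hcb]; exact hd.continuousOn
    have himg := hcont.image_closure
    have hmem : φ l ∈ φ '' closure (ball (0:ℂ) 1) := ⟨l, by rw [← hcb]; exact hl, rfl⟩
    have h2 := himg hmem
    refine closure_mono ?_ h2
    rintro _ ⟨m, hm, rfl⟩
    exact hb' m hm
  -- K is nonempty
  obtain ⟨φ₀, hφ₀d, hφ₀0, hφ₀b, hφ₀s⟩ := exists_disc α hα 0 h0M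
  have h1s : (1:ℂ) ∈ sphere (0:ℂ) 1 := by simp
  have hKne : (closure (Mvar α) ∩ triTorus).Nonempty := by
    refine ⟨φ₀ 1, ?_, hφ₀s 1 h1s⟩
    exact hmapscl φ₀ hφ₀d hφ₀b 1 (sphere_subset_closedBall h1s)
  -- maximum over K
  have hKcomp : IsCompact (closure (Mvar α) ∩ triTorus) := hcc.inter_right hTclosed
  have hfK : ContinuousOn (fun x => ‖f x‖) (closure (Mvar α) ∩ triTorus) :=
    (hfc.mono inter_subset_left).norm
  obtain ⟨w, hwK, hwmax⟩ := hKcomp.exists_isMaxOn hKne hfK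
  have hwmax' : ∀ y ∈ closure (Mvar α) ∩ triTorus, ‖f y‖ ≤ ‖f w‖ := fun y hy => hwmax hy
  -- max modulus step
  have hMax : ∀ q ∈ Mvar α, ‖f q‖ ≤ ‖f w‖ := by
    intro q hq
    obtain ⟨φ, hφd, hφ0, hφb, hφs⟩ := exists_disc α hα q hq
    have hgc : ContinuousOn (f ∘ φ) (closure (ball (0:ℂ) 1)) := by
      rw [closure_ball (0:ℂ) one_ne_zero]
      exact hfc.comp hφd.continuousOn (fun l hl => hmapscl φ hφd hφb l hl)
    have hgd : DifferentiableOn ℂ (f ∘ φ) (ball (0:ℂ) 1) := by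
      intro l hl
      obtain ⟨U, hUo, hUm, F, hFd, hFf⟩ := hfh (φ l) (hφb l hl)
      have hφcb : ContinuousOn φ (ball (0:ℂ) 1) :=
        (hφd.mono ball_subset_closedBall).continuousOn
      have hWo : IsOpen (ball (0:ℂ) 1 ∩ φ ⁻¹' U) :=
        hφcb.isOpen_inter_preimage isOpen_ball hUo
      have hWl : l ∈ ball (0:ℂ) 1 ∩ φ ⁻¹' U := ⟨hl, hUm⟩
      have hdiffW : DifferentiableOn ℂ (F ∘ φ) (ball (0:ℂ) 1 ∩ φ ⁻¹' U) := by
        apply hFd.comp (hφd.mono ?_) (fun x hx => hx.2)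
        exact fun x hx => ball_subset_closedBall hx.1
      have hcongr : DifferentiableOn ℂ (f ∘ φ) (ball (0:ℂ) 1 ∩ φ ⁻¹' U) := by
        apply hdiffW.congr
        intro x hx
        exact (hFf (φ x) ⟨hx.2, hφb x hx.1⟩).symm
      exact (hcongr.differentiableAt (hWo.mem_nhds hWl)).differentiableWithinAt
    have hg : DiffContOnCl ℂ (f ∘ φ) (ball (0:ℂ) 1) := ⟨hgd, hgc⟩
    have hbound : ∀ l ∈ frontier (ball (0:ℂ) 1), ‖(f ∘ φ) l‖ ≤ ‖f w‖ := by
      intro l hl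
      rw [frontier_ball (0:ℂ) one_ne_zero] at hl
      exact hwmax' (φ l) ⟨hmapscl φ hφd hφb l (sphere_subset_closedBall hl), hφs l hl⟩
    have h0cl : (0:ℂ) ∈ closure (ball (0:ℂ) 1) := by
      rw [closure_ball (0:ℂ) one_ne_zero]
      exact mem_closedBall_self (by norm_num)
    have hfin := Complex.norm_le_of_forall_mem_frontier_norm_le isBounded_ball hg hbound h0cl
    simpa [Function.comp, hφ0] using hfin
  refine ⟨w, hwK, ?_⟩
  intro x hx
  have hne : (nhdsWithin x (Mvar α)).NeBot := mem_closure_iff_nhdsWithin_neBot.1 hx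
  have htend : Filter.Tendsto (fun y => ‖f y‖) (nhdsWithin x (Mvar α)) (nhds ‖f x‖) :=
    ((hfc x hx).mono subset_closure).norm
  have hev : ∀ᶠ y in nhdsWithin x (Mvar α), ‖f y‖ ≤ ‖f w‖ := by
    filter_upwards [self_mem_nhdsWithin] with y hy
    exact hMax y hy
  have hle := le_of_tendsto htend hev
  exact hle
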